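/- Let V be a finite-dimensional vector space over a field 𝕜, let f and Q be endomorphisms of V with Q ∘ Q = Q, let Z := range(Q), and suppose Z is invariant under f (f(z) ∈ Z for all z ∈ Z). Let N := Q + f ∘ (id − Q) and let f|_Z denote the restriction of f to Z (an endomorphism of Z). Then the characteristic polynomials satisfy charpoly(N) · charpoly(f|_Z) = (X − 1)^{dim Z} · charpoly(f). In particular, the eigenvalues of N are 1 (with multiplicity dim Z) together with the eigenvalues of f not belonging to the restriction f|_Z. -/

import Mathlib

open Polynomial

set_option maxHeartbeats 1000000 in
theorem stmt5 {𝕜 : Type*} [Field 𝕜] {V : Type*} [AddCommGroup V] [Module 𝕜 V]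
    [FiniteDimensional 𝕜 V]
    (f Q : V →ₗ[𝕜] V) (hQ : Q ∘ₗ Q = Q)
    (hZ : ∀ z ∈ LinearMap.range Q, f z ∈ LinearMap.range Q) :
    (Q + f ∘ₗ (LinearMap.id - Q)).charpoly * (f.restrict hZ).charpoly
      = (X - 1) ^ (Module.finrank 𝕜 (LinearMap.range Q)) * f.charpoly := by
  classical
  set N : V →ₗ[𝕜] V := Q + f ∘ₗ (LinearMap.id - Q) with hN
  have hQQ : ∀ x, Q (Q x) = Q x := fun x => congrArg (· x) hQ
  have hproj : LinearMap.IsProj (LinearMap.range Q) Q := by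
    refine ⟨fun x => LinearMap.mem_range_self Q x, ?_⟩
    rintro x ⟨y, rfl⟩
    exact hQQ y
  have hcompl : IsCompl (LinearMap.range Q) (LinearMap.ker Q) := hproj.isCompl
  set Z := LinearMap.range Q
  set W := LinearMap.ker Q
  let e : (Z × W) ≃ₗ[𝕜] V := Submodule.prodEquivOfIsCompl Z W hcompl
  let bZ := Module.Free.chooseBasis 𝕜 Z
  let bW := Module.Free.chooseBasis 𝕜 W
  let b := (bZ.prod bW).map e
  -- basic facts about b
  have hb_inl : ∀ c, b (Sum.inl c) = (bZ c : V) := by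
    intro c
    have h1 : (bZ.prod bW) (Sum.inl c) = (bZ c, (0 : W)) :=
      Prod.ext (Module.Basis.prod_apply_inl_fst _ _ _) (Module.Basis.prod_apply_inl_snd _ _ _)
    simp [b, Module.Basis.map_apply, h1, e, Submodule.coe_prodEquivOfIsCompl']
  have hb_inr : ∀ c, b (Sum.inr c) = (bW c : V) := by
    intro c
    have h1 : (bZ.prod bW) (Sum.inr c) = ((0 : Z), bW c) :=
      Prod.ext (Module.Basis.prod_apply_inr_fst _ _ _) (Module.Basis.prod_apply_inr_snd _ _ _)
    simp [b, Module.Basis.map_apply, h1, e, Submodule.coe_prodEquivOfIsCompl']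
  have hrepr_inl : ∀ (z : Z) (a), b.repr (z : V) (Sum.inl a) = bZ.repr z a := by
    intro z a
    have : e.symm (z : V) = (z, 0) := Submodule.prodEquivOfIsCompl_symm_apply_left Z W hcompl z
    simp [b, Module.Basis.map_repr, this, Module.Basis.prod_repr_inl]
  have hrepr_inr : ∀ (z : Z) (a), b.repr (z : V) (Sum.inr a) = 0 := by
    intro z a
    have : e.symm (z : V) = (z, 0) := Submodule.prodEquivOfIsCompl_symm_apply_left Z W hcompl z
    simp [b, Module.Basis.map_repr, this, Module.Basis.prod_repr_inr]
  -- N acts as the identity on Z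
  have hNZ : ∀ z ∈ Z, N z = z := by
    rintro z ⟨y, rfl⟩
    simp [hN, LinearMap.sub_apply, hQQ]
  -- N agrees with f on W
  have hNW : ∀ w ∈ W, N w = f w := by
    intro w hw
    have hw0 : Q w = 0 := hw
    simp [hN, LinearMap.sub_apply, hw0]
  set Mf := LinearMap.toMatrix b b f with hMf
  set MN := LinearMap.toMatrix b b N with hMN
  set A := LinearMap.toMatrix bZ bZ (f.restrict hZ) with hA
  -- block structure of Mf
  have hfZ' : ∀ c, f (bZ c : V) ∈ Z := fun c => hZ _ (bZ c).2
  have hMf_blocks : Mf = Matrix.fromBlocks A Mf.toBlocks₁₂ 0 Mf.toBlocks₂₂ := by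
    ext i j
    rcases i with i | i <;> rcases j with j | j
    · -- upper-left block: equals A
      simp only [Matrix.fromBlocks_apply₁₁]
      rw [hMf, LinearMap.toMatrix_apply, hb_inl]
      have : f (bZ j : V) = ((⟨f (bZ j : V), hfZ' j⟩ : Z) : V) := rfl
      rw [this, hrepr_inl]
      rw [hA, LinearMap.toMatrix_apply]
      congr 1
    · simp [Matrix.toBlocks₁₂]
    · -- lower-left block: zero
      simp only [Matrix.fromBlocks_apply₂₁, Matrix.zero_apply]
      rw [hMf, LinearMap.toMatrix_apply, hb_inl]
      have : f (bZ j : V) = ((⟨f (bZ j : V), hfZ' j⟩ : Z) : V) := rfl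
      rw [this, hrepr_inr]
    · simp [Matrix.toBlocks₂₂]
  -- block structure of MN
  have hMN_blocks : MN = Matrix.fromBlocks 1 MN.toBlocks₁₂ 0 Mf.toBlocks₂₂ := by
    ext i j
    rcases i with i | i <;> rcases j with j | j
    · simp only [Matrix.fromBlocks_apply₁₁]
      rw [hMN, LinearMap.toMatrix_apply, hb_inl, hNZ _ (bZ j).2, hrepr_inl]
      simp [Matrix.one_apply, Finsupp.single_apply, eq_comm]
    · simp [Matrix.toBlocks₁₂]
    · simp only [Matrix.fromBlocks_apply₂₁, Matrix.zero_apply]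
      rw [hMN, LinearMap.toMatrix_apply, hb_inl, hNZ _ (bZ j).2, hrepr_inr]
    · simp only [Matrix.fromBlocks_apply₂₂, Matrix.toBlocks₂₂, Matrix.of_apply]
      rw [hMN, hMf, LinearMap.toMatrix_apply, LinearMap.toMatrix_apply, hb_inr,
        hNW _ (bW j).2]
  -- charpoly of the identity block
  have hone : (1 : Matrix (Module.Free.ChooseBasisIndex 𝕜 Z)
      (Module.Free.ChooseBasisIndex 𝕜 Z) 𝕜).charpoly
      = (X - 1) ^ (Module.finrank 𝕜 Z) := by
    have hcm : Matrix.charmatrix (1 : Matrix (Module.Free.ChooseBasisIndex 𝕜 Z)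
        (Module.Free.ChooseBasisIndex 𝕜 Z) 𝕜)
        = Matrix.diagonal (fun _ => (X - 1 : 𝕜[X])) := by
      ext i j
      by_cases h : i = j
      · subst h
        simp [Matrix.charmatrix_apply_eq]
      · simp [Matrix.charmatrix_apply_ne _ _ _ h, Matrix.one_apply_ne h,
          Matrix.diagonal_apply_ne _ h]
    rw [Matrix.charpoly, hcm, Matrix.det_diagonal, Finset.prod_const,
      Module.finrank_eq_card_chooseBasisIndex 𝕜 Z, Finset.card_univ]
  have hchf : f.charpoly = A.charpoly * (Mf.toBlocks₂₂).charpoly := by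
    rw [← f.charpoly_toMatrix b, ← hMf, hMf_blocks, Matrix.charpoly_fromBlocks_zero₂₁]
    rw [← hMf_blocks]
  have hchN : N.charpoly = (X - 1) ^ (Module.finrank 𝕜 Z) * (Mf.toBlocks₂₂).charpoly := by
    rw [← N.charpoly_toMatrix b, ← hMN, hMN_blocks, Matrix.charpoly_fromBlocks_zero₂₁, hone]
  have hchA : (f.restrict hZ).charpoly = A.charpoly := ((f.restrict hZ).charpoly_toMatrix bZ).symm
  rw [hchN, hchA, hchf]
  ring
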